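/- Let H_0, ..., H_{K-1} be symmetric d×d matrices with 0 ⪯ H_k ⪯ H·I, 0 < α ≤ 1/H, g ∈ R^d, and 1 ≤ L < K. Define Ĝ = [I + Σ_{l=1}^{L} Σ_{0≤k_1<...<k_l<K} ∏_{i=1}^{l}(-α H_{k_i})] g. Then ‖∏_{k=0}^{K-1}(I - α H_k) g - Ĝ‖ ≤ C(K, L+1)(αH)^{L+1} ‖g‖. -/

import Mathlib

open Matrix Finset

variable {d : ℕ}

/-- Operator (spectral) norm of a real `d × d` matrix, acting on Euclidean space. -/
noncomputable def matOpNorm (M : Matrix (Fin d) (Fin d) ℝ) : ℝ :=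
  ‖Matrix.toEuclideanCLM (𝕜 := ℝ) M‖

/-- Apply a matrix to a vector of Euclidean space. -/
noncomputable def applyM (M : Matrix (Fin d) (Fin d) ℝ) (g : EuclideanSpace ℝ (Fin d)) :
    EuclideanSpace ℝ (Fin d) :=
  Matrix.toEuclideanCLM (𝕜 := ℝ) M g

/-- Ordered product `∏_{k=a}^{a+n-1} (I - α H k)`, factors ordered by increasing `k`. -/
def mulList (H : ℕ → Matrix (Fin d) (Fin d) ℝ) (α : ℝ) (a n : ℕ) :
    Matrix (Fin d) (Fin d) ℝ :=
  ((List.range' a n).map (fun k => (1 : Matrix (Fin d) (Fin d) ℝ) - α • H k)).prod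

/-- Truncated binomial expansion
`I + Σ_{l=1}^{L} Σ_{0 ≤ k₁ < … < k_l < K} ∏_{i=1}^{l} (-α H_{k_i})`,
with each inner product ordered by increasing index. -/
def binomSum (H : ℕ → Matrix (Fin d) (Fin d) ℝ) (α : ℝ) (K L : ℕ) :
    Matrix (Fin d) (Fin d) ℝ :=
  1 + ∑ l ∈ Finset.Icc 1 L, ∑ s ∈ (Finset.range K).powersetCard l,
      ((s.sort (· ≤ ·)).map (fun k => -(α • H k))).prod

/-! ### Auxiliary: operator norm bounds for PSD matrices -/

lemma bmlKeyIdentity (M S : Matrix (Fin d) (Fin d) ℝ) (c : ℝ) (hmm : S * S = M) :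
    (c^2) • (1 : Matrix (Fin d) (Fin d) ℝ) - M * M
      = c • (c • 1 - M) + S * (c • 1 - M) * S := by
  subst hmm
  simp only [mul_sub, sub_mul, smul_sub, smul_smul, mul_smul_comm, smul_mul_assoc,
    pow_two, mul_one, one_mul, mul_assoc]
  abel

lemma bmlPsdSmul {M : Matrix (Fin d) (Fin d) ℝ} {c : ℝ} (hc : 0 ≤ c) (h : M.PosSemidef) :
    (c • M).PosSemidef := by
  refine ⟨?_, fun x => ?_⟩
  · have := h.1.eq
    simp only [Matrix.IsHermitian, conjTranspose_smul, star_trivial, this]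
  · exact (h.smul hc).2 x

open scoped MatrixOrder in
lemma bmlSqPsd {M : Matrix (Fin d) (Fin d) ℝ} {c : ℝ} (hc : 0 ≤ c)
    (h1 : M.PosSemidef) (h2 : (c • 1 - M).PosSemidef) :
    ((c^2) • 1 - M * M).PosSemidef := by
  rw [bmlKeyIdentity M (CFC.sqrt M) c (CFC.sqrt_mul_sqrt_self M h1.nonneg)]
  refine (bmlPsdSmul hc h2).add ?_
  have := h2.conjTranspose_mul_mul_same (CFC.sqrt M)
  rwa [(CFC.sqrt_nonneg M).posSemidef.1.eq] at this

lemma bmlOpNormLe {M : Matrix (Fin d) (Fin d) ℝ} {c : ℝ} (hc : 0 ≤ c)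
    (h1 : M.PosSemidef) (h2 : (c • 1 - M).PosSemidef) : matOpNorm M ≤ c := by
  refine ContinuousLinearMap.opNorm_le_bound _ hc (fun x => ?_)
  have key := (bmlSqPsd hc h1 h2).dotProduct_mulVec_nonneg (x : Fin d → ℝ)
  have hTx : ∀ i, (Matrix.toEuclideanCLM (𝕜 := ℝ) M x) i = (M *ᵥ x) i := by
    intro i; rfl
  have hn2 : ‖Matrix.toEuclideanCLM (𝕜 := ℝ) M x‖^2 = (M *ᵥ x) ⬝ᵥ (M *ᵥ x) := by
    rw [EuclideanSpace.norm_eq, Real.sq_sqrt (by positivity)]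
    simp [hTx, dotProduct, pow_two]
  have hx2 : ‖x‖^2 = (x : Fin d → ℝ) ⬝ᵥ (x : Fin d → ℝ) := by
    rw [EuclideanSpace.norm_eq, Real.sq_sqrt (by positivity)]
    simp [dotProduct, pow_two]
  have hT : Mᵀ = M := by
    ext i j
    have := congrFun (congrFun h1.1.eq i) j
    simpa [Matrix.conjTranspose_apply] using this
  have hsym : (M *ᵥ x) ⬝ᵥ (M *ᵥ x) = (x : Fin d → ℝ) ⬝ᵥ ((M * M) *ᵥ x) := by
    symm
    rw [← Matrix.mulVec_mulVec, Matrix.dotProduct_mulVec, ← Matrix.mulVec_transpose, hT]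
  have key2 : (M *ᵥ x) ⬝ᵥ (M *ᵥ x) ≤ c^2 * ((x : Fin d → ℝ) ⬝ᵥ (x : Fin d → ℝ)) := by
    simp only [star_trivial, Matrix.sub_mulVec, Matrix.smul_mulVec, Matrix.one_mulVec,
      dotProduct_sub, dotProduct_smul, smul_eq_mul, sub_nonneg] at key
    rw [hsym]
    exact key
  have h1' : ‖Matrix.toEuclideanCLM (𝕜 := ℝ) M x‖^2 ≤ (c * ‖x‖)^2 := by
    rw [hn2, mul_pow, hx2]; exact key2
  calc ‖Matrix.toEuclideanCLM (𝕜 := ℝ) M x‖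
      = Real.sqrt (‖Matrix.toEuclideanCLM (𝕜 := ℝ) M x‖^2) := (Real.sqrt_sq (norm_nonneg _)).symm
    _ ≤ Real.sqrt ((c * ‖x‖)^2) := Real.sqrt_le_sqrt h1'
    _ = c * ‖x‖ := Real.sqrt_sq (by positivity)

/-! ### matOpNorm is an algebra norm (inequalities) -/

lemma matOpNorm_nonneg (M : Matrix (Fin d) (Fin d) ℝ) : 0 ≤ matOpNorm M := norm_nonneg _

lemma matOpNorm_one_le : matOpNorm (1 : Matrix (Fin d) (Fin d) ℝ) ≤ 1 := by
  rw [matOpNorm, _root_.map_one]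
  exact ContinuousLinearMap.norm_id_le

lemma matOpNorm_mul_le (A B : Matrix (Fin d) (Fin d) ℝ) :
    matOpNorm (A * B) ≤ matOpNorm A * matOpNorm B := by
  rw [matOpNorm, _root_.map_mul]
  exact norm_mul_le _ _

lemma matOpNorm_neg (A : Matrix (Fin d) (Fin d) ℝ) : matOpNorm (-A) = matOpNorm A := by
  rw [matOpNorm, map_neg, norm_neg, matOpNorm]

lemma matOpNorm_sum_le {ι : Type*} (s : Finset ι) (f : ι → Matrix (Fin d) (Fin d) ℝ) :
    matOpNorm (∑ i ∈ s, f i) ≤ ∑ i ∈ s, matOpNorm (f i) := by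
  rw [matOpNorm, _root_.map_sum]
  exact norm_sum_le _ _

lemma applyM_norm_le (M : Matrix (Fin d) (Fin d) ℝ) (g : EuclideanSpace ℝ (Fin d)) :
    ‖applyM M g‖ ≤ matOpNorm M * ‖g‖ :=
  ContinuousLinearMap.le_opNorm _ g


lemma matOpNorm_list_prod_le (f : ℕ → Matrix (Fin d) (Fin d) ℝ) (c : ℝ) (hc : 0 ≤ c) :
    ∀ (l : List ℕ), (∀ k ∈ l, matOpNorm (f k) ≤ c) →
      matOpNorm ((l.map f).prod) ≤ c ^ l.length := by
  intro l
  induction l with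
  | nil => intro _; simpa using matOpNorm_one_le
  | cons a t ih =>
    intro h
    simp only [List.map_cons, List.prod_cons, List.length_cons]
    calc matOpNorm (f a * (t.map f).prod)
        ≤ matOpNorm (f a) * matOpNorm ((t.map f).prod) := matOpNorm_mul_le _ _
      _ ≤ c * c ^ t.length := by
          have h1 := h a (List.mem_cons_self)
          have h2 := ih (fun k hk => h k (List.mem_cons_of_mem _ hk))
          exact mul_le_mul h1 h2 (matOpNorm_nonneg _) hc
      _ = c ^ (t.length + 1) := by ring

/-! ### Combinatorics of the truncated expansion -/

/-- Sum over subsets of `range n` of size `l` of ordered products. -/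
def bmlT (Hm : ℕ → Matrix (Fin d) (Fin d) ℝ) (α : ℝ) (n l : ℕ) :
    Matrix (Fin d) (Fin d) ℝ :=
  ∑ s ∈ (Finset.range n).powersetCard l,
      ((s.sort (· ≤ ·)).map (fun k => -(α • Hm k))).prod

/-- Truncated sum up to order `L`. -/
def bmlS (Hm : ℕ → Matrix (Fin d) (Fin d) ℝ) (α : ℝ) (n L : ℕ) :
    Matrix (Fin d) (Fin d) ℝ :=
  ∑ j ∈ Finset.range (L + 1), bmlT Hm α n j

lemma bmlSortConcat (s : Finset ℕ) (a : ℕ) (h : ∀ b ∈ s, b < a) :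
    (insert a s).sort (· ≤ ·) = s.sort (· ≤ ·) ++ [a] := by
  have ha : a ∉ s := fun hmem => lt_irrefl a (h a hmem)
  refine (fun h1 h2 h3 => List.Perm.eq_of_pairwise' (r := (· ≤ ·)) h2 h3 h1) ?_ ?_ ?_
  · rw [← Multiset.coe_eq_coe, Finset.sort_eq, Finset.insert_val_of_notMem ha]
    have : ((s.sort (· ≤ ·) ++ [a] : List ℕ) : Multiset ℕ) = s.val + {a} := by
      show (s.sort (· ≤ ·) : Multiset ℕ) + ({a} : Multiset ℕ) = s.val + {a}
      rw [Finset.sort_eq]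
    rw [this, add_comm, ← Multiset.singleton_add]
  · exact Finset.pairwise_sort _ _
  · rw [List.pairwise_append]
    refine ⟨Finset.pairwise_sort _ _, by simp, ?_⟩
    intro x hx y hy
    rw [List.mem_singleton] at hy
    subst hy
    exact (h x ((Finset.mem_sort _).mp hx)).le

lemma bmlT_zero (Hm : ℕ → Matrix (Fin d) (Fin d) ℝ) (α : ℝ) (n : ℕ) :
    bmlT Hm α n 0 = 1 := by
  simp [bmlT]

lemma bmlT_of_lt (Hm : ℕ → Matrix (Fin d) (Fin d) ℝ) (α : ℝ) {n l : ℕ} (h : n < l) :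
    bmlT Hm α n l = 0 := by
  rw [bmlT, Finset.powersetCard_eq_empty.mpr (by simpa using h), Finset.sum_empty]

lemma bmlT_rec (Hm : ℕ → Matrix (Fin d) (Fin d) ℝ) (α : ℝ) (n l : ℕ) :
    bmlT Hm α (n + 1) (l + 1)
      = bmlT Hm α n (l + 1) + bmlT Hm α n l * (-(α • Hm n)) := by
  rw [bmlT, Finset.range_add_one,
    Finset.powersetCard_succ_insert (Finset.notMem_range_self) l]
  have hdisj : Disjoint ((Finset.range n).powersetCard (l + 1))
      (Finset.image (insert n) ((Finset.range n).powersetCard l)) := by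
    rw [Finset.disjoint_left]
    intro t ht hti
    obtain ⟨u, hu, rfl⟩ := Finset.mem_image.mp hti
    have hsub := (Finset.mem_powersetCard.mp ht).1
    exact (Finset.notMem_range_self) (hsub (Finset.mem_insert_self n u))
  rw [Finset.sum_union hdisj]
  congr 1
  rw [Finset.sum_image]
  · rw [bmlT, Finset.sum_mul]
    apply Finset.sum_congr rfl
    intro s hs
    have hsub := (Finset.mem_powersetCard.mp hs).1
    have hlt : ∀ b ∈ s, b < n := fun b hb => Finset.mem_range.mp (hsub hb)
    rw [bmlSortConcat s n hlt, List.map_append, List.prod_append]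
    simp
  · intro x hx y hy hxy
    have hx' : n ∉ x := fun h =>
      Finset.notMem_range_self ((Finset.mem_powersetCard.mp hx).1 h)
    have hy' : n ∉ y := fun h =>
      Finset.notMem_range_self ((Finset.mem_powersetCard.mp hy).1 h)
    have := congrArg (Finset.erase · n) hxy
    simpa [Finset.erase_insert hx', Finset.erase_insert hy'] using this

lemma bmlS_rec (Hm : ℕ → Matrix (Fin d) (Fin d) ℝ) (α : ℝ) (n L : ℕ) :
    bmlS Hm α (n + 1) L
      = bmlS Hm α n L + (bmlS Hm α n L - bmlT Hm α n L) * (-(α • Hm n)) := by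
  have e1 : ∑ i ∈ Finset.range L, bmlT Hm α n (i + 1) + 1
      = ∑ j ∈ Finset.range (L + 1), bmlT Hm α n j := by
    rw [Finset.sum_range_succ', bmlT_zero]
  have e2 : ∑ i ∈ Finset.range L, bmlT Hm α n i
      = ∑ j ∈ Finset.range (L + 1), bmlT Hm α n j - bmlT Hm α n L := by
    rw [Finset.sum_range_succ]
    abel
  rw [bmlS, Finset.sum_range_succ', bmlS]
  simp only [bmlT_rec]
  rw [Finset.sum_add_distrib, ← Finset.sum_mul, bmlT_zero, e2, add_right_comm, e1]

lemma mulList_zero (Hm : ℕ → Matrix (Fin d) (Fin d) ℝ) (α : ℝ) (a : ℕ) :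
    mulList Hm α a 0 = 1 := by
  simp [mulList]

lemma mulList_succ_right (Hm : ℕ → Matrix (Fin d) (Fin d) ℝ) (α : ℝ) (a n : ℕ) :
    mulList Hm α a (n + 1) = mulList Hm α a n * (1 - α • Hm (a + n)) := by
  rw [mulList, List.range'_concat, List.map_append, List.prod_append, mulList]
  simp

lemma mulList_eq_sum (Hm : ℕ → Matrix (Fin d) (Fin d) ℝ) (α : ℝ) (n : ℕ) :
    mulList Hm α 0 n = ∑ j ∈ Finset.range (n + 1), bmlT Hm α n j := by
  induction n with
  | zero => simp [mulList, bmlT_zero]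
  | succ n ih =>
    have e1 : ∑ i ∈ Finset.range (n + 1), bmlT Hm α n (i + 1) + 1
        = ∑ j ∈ Finset.range (n + 1), bmlT Hm α n j := by
      rw [Finset.sum_range_succ, bmlT_of_lt Hm α (Nat.lt_succ_self n)]
      conv_rhs => rw [Finset.sum_range_succ']
      rw [bmlT_zero, add_zero]
    rw [mulList_succ_right, ih, zero_add]
    have hBn : (1 : Matrix (Fin d) (Fin d) ℝ) - α • Hm n = 1 + -(α • Hm n) := by
      rw [sub_eq_add_neg]
    rw [hBn, mul_add, mul_one]
    conv_rhs => rw [Finset.sum_range_succ']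
    simp only [bmlT_rec, bmlT_zero]
    rw [Finset.sum_add_distrib, ← Finset.sum_mul, add_right_comm, e1]

lemma bmlRemainder (Hm : ℕ → Matrix (Fin d) (Fin d) ℝ) (α : ℝ) (L : ℕ) :
    ∀ n, L ≤ n → mulList Hm α 0 n - bmlS Hm α n L
      = ∑ m ∈ Finset.Ico L n,
          bmlT Hm α m L * (-(α • Hm m)) * mulList Hm α (m + 1) (n - m - 1) := by
  intro n hn
  induction n, hn using Nat.le_induction with
  | base =>
    rw [Finset.Ico_self, Finset.sum_empty, sub_eq_zero, mulList_eq_sum, bmlS]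
  | succ n hn ih =>
    have hstep : mulList Hm α 0 (n + 1) - bmlS Hm α (n + 1) L
        = (mulList Hm α 0 n - bmlS Hm α n L) * (1 - α • Hm n)
          + bmlT Hm α n L * (-(α • Hm n)) := by
      have h1 : mulList Hm α 0 (n + 1) = mulList Hm α 0 n * (1 - α • Hm n) := by
        have := mulList_succ_right Hm α 0 n
        rwa [zero_add] at this
      rw [h1, bmlS_rec]
      have hBn : (1 : Matrix (Fin d) (Fin d) ℝ) - α • Hm n = 1 + -(α • Hm n) :=
        sub_eq_add_neg _ _
      rw [hBn]
      noncomm_ring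
      simp only [smul_add, smul_neg, neg_smul, one_smul, smul_smul]
      abel
    rw [hstep, ih, Finset.sum_mul, Finset.sum_Ico_succ_top hn]
    congr 1
    · apply Finset.sum_congr rfl
      intro m hm
      have hmn : m < n := (Finset.mem_Ico.mp hm).2
      have e : mulList Hm α (m + 1) (n - m - 1) * (1 - α • Hm n)
          = mulList Hm α (m + 1) (n + 1 - m - 1) := by
        have h2 : n + 1 - m - 1 = (n - m - 1) + 1 := by omega
        rw [h2, mulList_succ_right]
        have h3 : m + 1 + (n - m - 1) = n := by omega
        rw [h3]
      rw [mul_assoc, e]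
    · have h4 : n + 1 - n - 1 = 0 := by omega
      rw [h4, mulList_zero, mul_one]

lemma binomSum_eq (Hm : ℕ → Matrix (Fin d) (Fin d) ℝ) (α : ℝ) (K L : ℕ) :
    binomSum Hm α K L = bmlS Hm α K L := by
  have hins : Finset.range (L + 1) = insert 0 (Finset.Icc 1 L) := by
    ext x; simp; omega
  rw [binomSum, bmlS, hins, Finset.sum_insert (by simp), bmlT_zero]
  rfl

/-- BinomMAML error bound under convexity:
`‖∏_{k=0}^{K-1}(I - α H_k) g - Ĝ‖ ≤ C(K, L+1) (αH)^{L+1} ‖g‖` for `1 ≤ L < K`. -/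
theorem binommaml_error_bound_convex (K L : ℕ) (Hm : ℕ → Matrix (Fin d) (Fin d) ℝ) (α H : ℝ)
    (hpsd : ∀ k, (Hm k).PosSemidef)
    (hub : ∀ k, (H • (1 : Matrix (Fin d) (Fin d) ℝ) - Hm k).PosSemidef)
    (hH : 0 < H) (hα : 0 < α) (hαH : α ≤ 1 / H) (hL1 : 1 ≤ L) (hLK : L < K)
    (g : EuclideanSpace ℝ (Fin d)) :
    ‖applyM (mulList Hm α 0 K) g - applyM (binomSum Hm α K L) g‖
      ≤ (K.choose (L + 1) : ℝ) * (α * H) ^ (L + 1) * ‖g‖ := by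
  have hαH1 : 0 ≤ α * H := by positivity
  have hαHle : α * H ≤ 1 := by
    rw [le_div_iff₀ hH] at hαH
    linarith
  have hA : ∀ k, matOpNorm (-(α • Hm k)) ≤ α * H := by
    intro k
    rw [matOpNorm_neg]
    apply bmlOpNormLe hαH1 (bmlPsdSmul hα.le (hpsd k))
    have h2 : (α * H) • (1 : Matrix (Fin d) (Fin d) ℝ) - α • Hm k
        = α • (H • 1 - Hm k) := by
      rw [smul_sub, smul_smul]
    rw [h2]
    exact bmlPsdSmul hα.le (hub k)
  have hB1 : ∀ k, matOpNorm ((1 : Matrix (Fin d) (Fin d) ℝ) - α • Hm k) ≤ 1 := by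
    intro k
    apply bmlOpNormLe zero_le_one
    · have h1 : (1 : Matrix (Fin d) (Fin d) ℝ) - α • Hm k
          = (1 - α * H) • 1 + α • (H • 1 - Hm k) := by
        rw [smul_sub, smul_smul, sub_smul, one_smul]
        abel
      rw [h1]
      exact (bmlPsdSmul (by linarith) Matrix.PosSemidef.one).add (bmlPsdSmul hα.le (hub k))
    · have h3 : (1 : ℝ) • (1 : Matrix (Fin d) (Fin d) ℝ) - (1 - α • Hm k) = α • Hm k := by
        rw [one_smul]; abel
      rw [h3]
      exact bmlPsdSmul hα.le (hpsd k)
  have hmul : ∀ a n, matOpNorm (mulList Hm α a n) ≤ 1 := by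
    intro a n
    have := matOpNorm_list_prod_le (fun k => (1 : Matrix (Fin d) (Fin d) ℝ) - α • Hm k) 1
      zero_le_one (List.range' a n) (fun k _ => hB1 k)
    simpa [mulList] using this
  have hTb : ∀ n, matOpNorm (bmlT Hm α n L) ≤ (n.choose L : ℝ) * (α * H) ^ L := by
    intro n
    rw [bmlT]
    refine le_trans (matOpNorm_sum_le _ _) ?_
    have hone : ∀ s ∈ (Finset.range n).powersetCard L,
        matOpNorm (((s.sort (· ≤ ·)).map (fun k => -(α • Hm k))).prod) ≤ (α * H) ^ L := by
      intro s hs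
      have hcard : (s.sort (· ≤ ·)).length = L := by
        rw [Finset.length_sort]
        exact (Finset.mem_powersetCard.mp hs).2
      have := matOpNorm_list_prod_le (fun k => -(α • Hm k)) (α * H) hαH1 (s.sort (· ≤ ·))
        (fun k _ => hA k)
      rwa [hcard] at this
    refine le_trans (Finset.sum_le_sum hone) ?_
    rw [Finset.sum_const, Finset.card_powersetCard, Finset.card_range, nsmul_eq_mul]
  have hcs : ∑ m ∈ Finset.Ico L K, (m.choose L : ℝ) = (K.choose (L + 1) : ℝ) := by
    rw [← Nat.cast_sum]
    congr 1
    have hK : K - 1 + 1 = K := by omega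
    have hIco : Finset.Ico L K = Finset.Icc L (K - 1) := by
      ext x
      simp only [Finset.mem_Ico, Finset.mem_Icc]
      omega
    rw [hIco]
    have := Nat.sum_Icc_choose (K - 1) L
    rwa [hK] at this
  have hsub : applyM (mulList Hm α 0 K) g - applyM (binomSum Hm α K L) g
      = applyM (mulList Hm α 0 K - binomSum Hm α K L) g := by
    simp [applyM, _root_.map_sub, ContinuousLinearMap.sub_apply]
  rw [hsub, binomSum_eq, bmlRemainder Hm α L K (le_of_lt hLK)]
  refine le_trans (applyM_norm_le _ _) ?_
  refine mul_le_mul_of_nonneg_right ?_ (norm_nonneg g)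
  refine le_trans (matOpNorm_sum_le _ _) ?_
  have hterm : ∀ m ∈ Finset.Ico L K,
      matOpNorm (bmlT Hm α m L * (-(α • Hm m)) * mulList Hm α (m + 1) (K - m - 1))
        ≤ (m.choose L : ℝ) * (α * H) ^ (L + 1) := by
    intro m _
    calc matOpNorm (bmlT Hm α m L * (-(α • Hm m)) * mulList Hm α (m + 1) (K - m - 1))
        ≤ matOpNorm (bmlT Hm α m L * (-(α • Hm m)))
            * matOpNorm (mulList Hm α (m + 1) (K - m - 1)) := matOpNorm_mul_le _ _
      _ ≤ matOpNorm (bmlT Hm α m L * (-(α • Hm m))) * 1 :=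
          mul_le_mul_of_nonneg_left (hmul _ _) (matOpNorm_nonneg _)
      _ = matOpNorm (bmlT Hm α m L * (-(α • Hm m))) := mul_one _
      _ ≤ matOpNorm (bmlT Hm α m L) * matOpNorm (-(α • Hm m)) := matOpNorm_mul_le _ _
      _ ≤ ((m.choose L : ℝ) * (α * H) ^ L) * (α * H) :=
          mul_le_mul (hTb m) (hA m) (matOpNorm_nonneg _) (by positivity)
      _ = (m.choose L : ℝ) * (α * H) ^ (L + 1) := by ring
  refine le_trans (Finset.sum_le_sum hterm) ?_
  rw [← Finset.sum_mul, hcs]
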